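/- Equivalence of the MAC form and the min form (Appendix B): for a rate tuple (R1, ..., RK) and nonempty demand set D1 ⊆ [K], the following two conditions are equivalent: (i) there exists S with D1 ⊆ S ⊆ [K] such that for all T ⊆ S, R_T ≤ I(X_T; Y1 | X_{S\T}, Q); (ii) for every V ⊆ [K] with V ∩ D1 ≠ ∅, there exists V' ⊆ V with V' ∩ D1 = V ∩ D1 such that R_{V'} ≤ I(X_{V'}; Y1 | X_{[K]\V}, Q). -/

import Mathlib

open scoped BigOperators
open Filter

set_option synthInstance.maxSize 4000
set_option synthInstance.maxHeartbeats 1000000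
set_option maxHeartbeats 1000000

noncomputable section

/-- Shannon entropy (base 2) of a finitely supported distribution `p`. -/
def ent {α : Type*} [Fintype α] (p : α → ℝ) : ℝ := -∑ a, p a * Real.logb 2 (p a)

/-- The distribution (pushforward) of a random variable `f` on the finite
probability space `(Ω, p)`. -/
def distOf {Ω β : Type*} [Fintype Ω] [DecidableEq β] (p : Ω → ℝ) (f : Ω → β) : β → ℝ :=
  fun b => ∑ ω, if f ω = b then p ω else 0

/-- The entropy `H(f)` of a random variable `f` on the finite probability space `(Ω, p)`. -/
def entOf {Ω β : Type*} [Fintype Ω] [Fintype β] [DecidableEq β] (p : Ω → ℝ) (f : Ω → β) : ℝ :=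
  ent (distOf p f)

/-- The conditional entropy `H(f | g)`. -/
def condEnt {Ω β γ : Type*} [Fintype Ω] [Fintype β] [Fintype γ] [DecidableEq β] [DecidableEq γ]
    (p : Ω → ℝ) (f : Ω → β) (g : Ω → γ) : ℝ :=
  entOf p (fun ω => (f ω, g ω)) - entOf p g

/-- The mutual information `I(f; g)`. -/
def mutInfo {Ω β γ : Type*} [Fintype Ω] [Fintype β] [Fintype γ] [DecidableEq β] [DecidableEq γ]
    (p : Ω → ℝ) (f : Ω → β) (g : Ω → γ) : ℝ :=
  entOf p f + entOf p g - entOf p (fun ω => (f ω, g ω))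

/-- The conditional mutual information `I(f; g | h)`. -/
def condMutInfo {Ω β γ δ : Type*} [Fintype Ω] [Fintype β] [Fintype γ] [Fintype δ]
    [DecidableEq β] [DecidableEq γ] [DecidableEq δ]
    (p : Ω → ℝ) (f : Ω → β) (g : Ω → γ) (h : Ω → δ) : ℝ :=
  entOf p (fun ω => (f ω, h ω)) + entOf p (fun ω => (g ω, h ω)) -
    entOf p (fun ω => (f ω, g ω, h ω)) - entOf p h

/-- `p` is a probability mass function on the finite alphabet `α`. -/
def IsPMF {α : Type*} [Fintype α] (p : α → ℝ) : Prop := (∀ a, 0 ≤ p a) ∧ ∑ a, p a = 1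

/-- The number `2^{nR}` of messages at blocklength `n` and rate `R` (in bits). -/
def msgSize (n : ℕ) (R : ℝ) : ℕ := max 1 ⌊(2 : ℝ) ^ ((n : ℝ) * R)⌋₊

instance (n : ℕ) (R : ℝ) : NeZero (msgSize n R) :=
  ⟨by have h : 1 ≤ msgSize n R := le_max_left _ _; omega⟩

/-- The `ε`-typical set: `xs` is `ε`-typical for the pmf `p` if the empirical frequency of
every symbol `a` is within `ε · p a` of `p a`. -/
def Typical {α : Type*} [Fintype α] [DecidableEq α] (p : α → ℝ) (ε : ℝ) {n : ℕ}
    (xs : Fin n → α) : Prop :=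
  ∀ a, |((Finset.univ.filter fun i => xs i = a).card : ℝ) / (n : ℝ) - p a| ≤ ε * p a

namespace MacAux
variable {Ω β γ δ : Type*} [Fintype Ω]

lemma sum_distOf [Fintype β] [DecidableEq β] (p : Ω → ℝ) (f : Ω → β) :
    ∑ b, distOf p f b = ∑ ω, p ω := by
  unfold distOf
  rw [Finset.sum_comm]
  simp

lemma entOf_comp_inj [Fintype β] [Fintype γ] [DecidableEq β] [DecidableEq γ]
    (p : Ω → ℝ) (f : Ω → β) (e : β → γ) (he : Function.Injective e) :
    entOf p (fun ω => e (f ω)) = entOf p f := by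
  unfold entOf ent
  congr 1
  have h0 : ∀ c, c ∉ Finset.univ.image e → distOf p (fun ω => e (f ω)) c = 0 := by
    intro c hc
    apply Finset.sum_eq_zero
    intro ω _
    rw [if_neg]
    intro h
    exact hc (Finset.mem_image.2 ⟨f ω, Finset.mem_univ _, h⟩)
  rw [← Finset.sum_subset (Finset.subset_univ (Finset.univ.image e))
      (fun c _ hc => by rw [h0 c hc]; simp)]
  rw [Finset.sum_image (fun x _ y _ h => he h)]
  apply Finset.sum_congr rfl
  intro b _
  have : distOf p (fun ω => e (f ω)) (e b) = distOf p f b := by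
    apply Finset.sum_congr rfl
    intro ω _
    simp [he.eq_iff]
  rw [this]

lemma distOf_marg13 [Fintype β] [Fintype γ] [Fintype δ] [DecidableEq β] [DecidableEq γ]
    [DecidableEq δ] (p : Ω → ℝ) (f : Ω → β) (g : Ω → γ) (h : Ω → δ) (b : β) (d : δ) :
    distOf p (fun ω => (f ω, h ω)) (b, d)
      = ∑ c, distOf p (fun ω => (f ω, g ω, h ω)) (b, c, d) := by
  unfold distOf
  rw [Finset.sum_comm]
  apply Finset.sum_congr rfl
  intro ω _
  by_cases h1 : f ω = b ∧ h ω = d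
  · simp [Prod.ext_iff, h1.1, h1.2]
  · rw [if_neg (by simpa [Prod.ext_iff] using h1)]
    symm
    apply Finset.sum_eq_zero
    intro c _
    rw [if_neg]
    simp only [Prod.ext_iff]
    tauto

lemma distOf_marg23 [Fintype β] [Fintype γ] [Fintype δ] [DecidableEq β] [DecidableEq γ]
    [DecidableEq δ] (p : Ω → ℝ) (f : Ω → β) (g : Ω → γ) (h : Ω → δ) (c : γ) (d : δ) :
    distOf p (fun ω => (g ω, h ω)) (c, d)
      = ∑ b, distOf p (fun ω => (f ω, g ω, h ω)) (b, c, d) := by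
  unfold distOf
  rw [Finset.sum_comm]
  apply Finset.sum_congr rfl
  intro ω _
  by_cases h1 : g ω = c ∧ h ω = d
  · simp [Prod.ext_iff, h1.1, h1.2]
  · rw [if_neg (by simpa [Prod.ext_iff] using h1)]
    symm
    apply Finset.sum_eq_zero
    intro b _
    rw [if_neg]
    simp only [Prod.ext_iff]
    tauto

lemma distOf_marg3 [Fintype β] [Fintype γ] [Fintype δ] [DecidableEq β] [DecidableEq γ]
    [DecidableEq δ] (p : Ω → ℝ) (f : Ω → β) (g : Ω → γ) (h : Ω → δ) (d : δ) :
    distOf p h d = ∑ b, ∑ c, distOf p (fun ω => (f ω, g ω, h ω)) (b, c, d) := by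
  unfold distOf
  have key : ∀ ω, (if h ω = d then p ω else 0)
      = ∑ b, ∑ c, if (f ω, g ω, h ω) = (b, c, d) then p ω else 0 := by
    intro ω
    by_cases h1 : h ω = d
    · simp [Prod.ext_iff, h1, ite_and, Finset.sum_ite_eq']
    · rw [if_neg h1]
      symm
      apply Finset.sum_eq_zero
      intro b _
      apply Finset.sum_eq_zero
      intro c _
      rw [if_neg]
      simp only [Prod.ext_iff]
      tauto
  calc ∑ ω, (if h ω = d then p ω else 0)
      = ∑ ω, ∑ b, ∑ c, if (f ω, g ω, h ω) = (b, c, d) then p ω else 0 :=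
        Finset.sum_congr rfl fun ω _ => key ω
    _ = ∑ b, ∑ ω, ∑ c, (if (f ω, g ω, h ω) = (b, c, d) then p ω else 0) := Finset.sum_comm
    _ = ∑ b, ∑ c, ∑ ω, (if (f ω, g ω, h ω) = (b, c, d) then p ω else 0) :=
        Finset.sum_congr rfl fun b _ => Finset.sum_comm


lemma sum_prod3 {β γ δ : Type*} [Fintype β] [Fintype γ] [Fintype δ] (F : β × γ × δ → ℝ) :
    ∑ z, F z = ∑ b, ∑ c, ∑ d, F (b, c, d) := by
  rw [Fintype.sum_prod_type]
  exact Finset.sum_congr rfl fun b _ => Fintype.sum_prod_type _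

lemma sum_comm3_1 {β γ δ : Type*} [Fintype β] [Fintype γ] [Fintype δ] (F : β → γ → δ → ℝ) :
    ∑ b, ∑ c, ∑ d, F b c d = ∑ d, ∑ b, ∑ c, F b c d := by
  rw [show (∑ b, ∑ c, ∑ d, F b c d) = ∑ b, ∑ d, ∑ c, F b c d from
    Finset.sum_congr rfl fun b _ => Finset.sum_comm]
  exact Finset.sum_comm

lemma sum_comm3_2 {β γ δ : Type*} [Fintype β] [Fintype γ] [Fintype δ] (F : β → γ → δ → ℝ) :
    ∑ b, ∑ c, ∑ d, F b c d = ∑ c, ∑ d, ∑ b, F b c d := by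
  rw [show (∑ b, ∑ c, ∑ d, F b c d) = ∑ c, ∑ b, ∑ d, F b c d from Finset.sum_comm]
  exact Finset.sum_congr rfl fun c _ => Finset.sum_comm

lemma ent_submod_core {β γ δ : Type*} [Fintype β] [Fintype γ] [Fintype δ]
    (P : β × γ × δ → ℝ) (h0 : ∀ z, 0 ≤ P z) (h1 : ∑ z, P z = 1) :
    ent P + ent (fun d : δ => ∑ b, ∑ c, P (b, c, d))
      ≤ ent (fun bd : β × δ => ∑ c, P (bd.1, c, bd.2))
        + ent (fun cd : γ × δ => ∑ b, P (b, cd.1, cd.2)) := by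
  classical
  set L : ℝ → ℝ := fun x => Real.logb 2 x with hL
  set P13 : β → δ → ℝ := fun b d => ∑ c, P (b, c, d) with hP13
  set P23 : γ → δ → ℝ := fun c d => ∑ b, P (b, c, d) with hP23
  set P3 : δ → ℝ := fun d => ∑ b, ∑ c, P (b, c, d) with hP3
  have hzeq : ∀ z : β × γ × δ, (z.1, z.2.1, z.2.2) = z := by intro z; simp
  have h13nn : ∀ b d, 0 ≤ P13 b d := fun b d => Finset.sum_nonneg fun c _ => h0 _
  have h23nn : ∀ c d, 0 ≤ P23 c d := fun c d => Finset.sum_nonneg fun b _ => h0 _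
  have h3nn : ∀ d, 0 ≤ P3 d :=
    fun d => Finset.sum_nonneg fun b _ => Finset.sum_nonneg fun c _ => h0 _
  -- rewrite the four entropies as sums over the full space
  have e13 : ent (fun bd : β × δ => ∑ c, P (bd.1, c, bd.2))
      = -∑ z : β × γ × δ, P z * L (P13 z.1 z.2.2) := by
    unfold ent
    rw [sum_prod3 (fun z => P z * L (P13 z.1 z.2.2)), Fintype.sum_prod_type]
    congr 1
    apply Finset.sum_congr rfl; intro b _
    rw [show (∑ c, ∑ d, P (b, c, d) * L (P13 b d))
        = ∑ d, ∑ c, P (b, c, d) * L (P13 b d) from Finset.sum_comm]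
    apply Finset.sum_congr rfl; intro d _
    exact Finset.sum_mul _ _ _
  have e23 : ent (fun cd : γ × δ => ∑ b, P (b, cd.1, cd.2))
      = -∑ z : β × γ × δ, P z * L (P23 z.2.1 z.2.2) := by
    unfold ent
    rw [sum_prod3 (fun z => P z * L (P23 z.2.1 z.2.2)),
      sum_comm3_2 (fun b c d => P (b, c, d) * L (P23 c d)), Fintype.sum_prod_type]
    congr 1
    apply Finset.sum_congr rfl; intro c _
    apply Finset.sum_congr rfl; intro d _
    exact Finset.sum_mul _ _ _
  have e3 : ent (fun d : δ => ∑ b, ∑ c, P (b, c, d))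
      = -∑ z : β × γ × δ, P z * L (P3 z.2.2) := by
    unfold ent
    rw [sum_prod3 (fun z => P z * L (P3 z.2.2)),
      sum_comm3_1 (fun b c d => P (b, c, d) * L (P3 d))]
    congr 1
    apply Finset.sum_congr rfl; intro d _
    rw [Finset.sum_mul]
    apply Finset.sum_congr rfl; intro b _
    exact Finset.sum_mul _ _ _
  have eP : ent P = -∑ z : β × γ × δ, P z * L (P z) := rfl
  rw [e13, e23, e3, eP]
  have key : 0 ≤ ∑ z : β × γ × δ,
      (P z * L (P z) + P z * L (P3 z.2.2)
        - P z * L (P13 z.1 z.2.2) - P z * L (P23 z.2.1 z.2.2)) := by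
    have hlog2 : (0:ℝ) < Real.log 2 := Real.log_pos (by norm_num)
    have pointwise : ∀ z : β × γ × δ,
        (Real.log 2)⁻¹ * (P z - P13 z.1 z.2.2 * P23 z.2.1 z.2.2 / P3 z.2.2)
          ≤ P z * L (P z) + P z * L (P3 z.2.2)
            - P z * L (P13 z.1 z.2.2) - P z * L (P23 z.2.1 z.2.2) := by
      intro z
      rcases eq_or_lt_of_le (h0 z) with hz | hz
      · rw [← hz]
        simp only [zero_mul, sub_zero, zero_sub, add_zero, zero_add, sub_self]
        have h4 : 0 ≤ P13 z.1 z.2.2 * P23 z.2.1 z.2.2 / P3 z.2.2 :=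
          div_nonneg (mul_nonneg (h13nn _ _) (h23nn _ _)) (h3nn _)
        have h2 : (0:ℝ) ≤ (Real.log 2)⁻¹ := le_of_lt (inv_pos.2 hlog2)
        nlinarith
      · have hp13 : 0 < P13 z.1 z.2.2 := by
          refine lt_of_lt_of_le hz ?_
          have := Finset.single_le_sum (f := fun c => P (z.1, c, z.2.2))
            (fun c _ => h0 _) (Finset.mem_univ z.2.1)
          simpa [hzeq z] using this
        have hp23 : 0 < P23 z.2.1 z.2.2 := by
          refine lt_of_lt_of_le hz ?_
          have := Finset.single_le_sum (f := fun b => P (b, z.2.1, z.2.2))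
            (fun b _ => h0 _) (Finset.mem_univ z.1)
          simpa [hzeq z] using this
        have hp3 : 0 < P3 z.2.2 := by
          refine lt_of_lt_of_le hz ?_
          refine le_trans ?_ (Finset.single_le_sum
            (f := fun b => ∑ c, P (b, c, z.2.2))
            (fun b _ => Finset.sum_nonneg fun c _ => h0 _) (Finset.mem_univ z.1))
          have := Finset.single_le_sum (f := fun c => P (z.1, c, z.2.2))
            (fun c _ => h0 _) (Finset.mem_univ z.2.1)
          simpa [hzeq z] using this
        set x : ℝ := P z * P3 z.2.2 / (P13 z.1 z.2.2 * P23 z.2.1 z.2.2) with hx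
        have hxpos : 0 < x := div_pos (mul_pos hz hp3) (mul_pos hp13 hp23)
        have hlogx : P z * L (P z) + P z * L (P3 z.2.2)
            - P z * L (P13 z.1 z.2.2) - P z * L (P23 z.2.1 z.2.2)
            = P z * (Real.log x / Real.log 2) := by
          rw [hx, Real.log_div (by positivity) (by positivity),
            Real.log_mul (ne_of_gt hz) (ne_of_gt hp3),
            Real.log_mul (ne_of_gt hp13) (ne_of_gt hp23)]
          simp only [hL, Real.logb]
          ring
        rw [hlogx]
        have hlb : 1 - x⁻¹ ≤ Real.log x := by
          have := Real.log_le_sub_one_of_pos (inv_pos.2 hxpos)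
          rw [Real.log_inv] at this
          linarith
        have hxinv : x⁻¹ = P13 z.1 z.2.2 * P23 z.2.1 z.2.2 / (P z * P3 z.2.2) := by
          rw [hx, inv_div]
        have hmul : P z * (1 - x⁻¹)
            = P z - P13 z.1 z.2.2 * P23 z.2.1 z.2.2 / P3 z.2.2 := by
          rw [hxinv]
          field_simp
        calc (Real.log 2)⁻¹ * (P z - P13 z.1 z.2.2 * P23 z.2.1 z.2.2 / P3 z.2.2)
            = (Real.log 2)⁻¹ * (P z * (1 - x⁻¹)) := by rw [hmul]
          _ ≤ (Real.log 2)⁻¹ * (P z * Real.log x) := by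
              apply mul_le_mul_of_nonneg_left _ (le_of_lt (inv_pos.2 hlog2))
              exact mul_le_mul_of_nonneg_left hlb (le_of_lt hz)
          _ = P z * (Real.log x / Real.log 2) := by ring
    have sum_frac : ∑ z : β × γ × δ,
        P13 z.1 z.2.2 * P23 z.2.1 z.2.2 / P3 z.2.2 ≤ 1 := by
      have step : ∀ d, ∑ b, ∑ c, P13 b d * P23 c d / P3 d
          = (if P3 d = 0 then 0 else P3 d) := by
        intro d
        have col : ∑ c, P23 c d = P3 d := Finset.sum_comm
        have expand : ∑ b, ∑ c, P13 b d * P23 c d / P3 d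
            = (∑ b, P13 b d) * (∑ c, P23 c d) / P3 d := by
          rw [Finset.sum_mul, Finset.sum_div]
          apply Finset.sum_congr rfl; intro b _
          rw [Finset.mul_sum, Finset.sum_div]
        rw [expand, col]
        have rowsum : ∑ b, P13 b d = P3 d := rfl
        rw [rowsum]
        by_cases hd : P3 d = 0
        · simp [hd]
        · rw [if_neg hd, mul_div_assoc, div_self hd, mul_one]
      have reorder : ∑ z : β × γ × δ, P13 z.1 z.2.2 * P23 z.2.1 z.2.2 / P3 z.2.2
          = ∑ d, ∑ b, ∑ c, P13 b d * P23 c d / P3 d := by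
        rw [sum_prod3 (fun z => P13 z.1 z.2.2 * P23 z.2.1 z.2.2 / P3 z.2.2)]
        exact sum_comm3_1 _
      rw [reorder]
      calc ∑ d, ∑ b, ∑ c, P13 b d * P23 c d / P3 d
          = ∑ d, (if P3 d = 0 then 0 else P3 d) :=
            Finset.sum_congr rfl fun d _ => step d
        _ ≤ ∑ d, P3 d := by
            apply Finset.sum_le_sum
            intro d _
            by_cases hd : P3 d = 0 <;> simp [hd, h3nn d]
        _ = 1 := by
            rw [← h1, sum_prod3 P]
            exact (sum_comm3_1 (fun b c d => P (b, c, d))).symm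
    have tsum : ∑ z : β × γ × δ,
        (Real.log 2)⁻¹ * (P z - P13 z.1 z.2.2 * P23 z.2.1 z.2.2 / P3 z.2.2)
        = (Real.log 2)⁻¹
          * (1 - ∑ z : β × γ × δ, P13 z.1 z.2.2 * P23 z.2.1 z.2.2 / P3 z.2.2) := by
      rw [← Finset.mul_sum, Finset.sum_sub_distrib, h1]
    have t0 : 0 ≤ ∑ z : β × γ × δ,
        (Real.log 2)⁻¹ * (P z - P13 z.1 z.2.2 * P23 z.2.1 z.2.2 / P3 z.2.2) := by
      rw [tsum]
      apply mul_nonneg (le_of_lt (inv_pos.2 hlog2))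
      linarith
    exact le_trans t0 (Finset.sum_le_sum fun z _ => pointwise z)
  have split : ∑ z : β × γ × δ,
      (P z * L (P z) + P z * L (P3 z.2.2)
        - P z * L (P13 z.1 z.2.2) - P z * L (P23 z.2.1 z.2.2))
      = (∑ z : β × γ × δ, P z * L (P z)) + (∑ z : β × γ × δ, P z * L (P3 z.2.2))
        - (∑ z : β × γ × δ, P z * L (P13 z.1 z.2.2))
        - (∑ z : β × γ × δ, P z * L (P23 z.2.1 z.2.2)) := by
    rw [Finset.sum_sub_distrib, Finset.sum_sub_distrib, Finset.sum_add_distrib]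
  rw [split] at key
  linarith

lemma entOf_submod [Fintype β] [Fintype γ] [Fintype δ] [DecidableEq β] [DecidableEq γ]
    [DecidableEq δ] (p : Ω → ℝ) (hp : IsPMF p) (f : Ω → β) (g : Ω → γ) (h : Ω → δ) :
    entOf p (fun ω => (f ω, g ω, h ω)) + entOf p h
      ≤ entOf p (fun ω => (f ω, h ω)) + entOf p (fun ω => (g ω, h ω)) := by
  classical
  set P : β × γ × δ → ℝ := distOf p (fun ω => (f ω, g ω, h ω)) with hP
  have h0 : ∀ z, 0 ≤ P z := by
    intro z
    apply Finset.sum_nonneg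
    intro ω _
    by_cases hc : (f ω, g ω, h ω) = z <;> simp [hc, hp.1 ω]
  have h1 : ∑ z, P z = 1 := by
    rw [hP, sum_distOf, hp.2]
  have core := ent_submod_core P h0 h1
  have m13 : distOf p (fun ω => (f ω, h ω)) = fun bd : β × δ => ∑ c, P (bd.1, c, bd.2) := by
    funext bd
    obtain ⟨b, d⟩ := bd
    exact distOf_marg13 p f g h b d
  have m23 : distOf p (fun ω => (g ω, h ω)) = fun cd : γ × δ => ∑ b, P (b, cd.1, cd.2) := by
    funext cd
    obtain ⟨c, d⟩ := cd
    exact distOf_marg23 p f g h c d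
  have m3 : distOf p h = fun d : δ => ∑ b, ∑ c, P (b, c, d) := by
    funext d
    exact distOf_marg3 p f g h d
  unfold entOf
  rw [m13, m23, m3]
  exact core

lemma mul_logb_mul (a b : ℝ) :
    (a * b) * Real.logb 2 (a * b) = (a * b) * Real.logb 2 a + (a * b) * Real.logb 2 b := by
  rcases eq_or_ne a 0 with rfl | ha
  · simp
  rcases eq_or_ne b 0 with rfl | hb
  · simp
  rw [Real.logb_mul ha hb, mul_add]

lemma prod_mul_logb_prod {ι : Type*} [DecidableEq ι] (s : Finset ι) (r : ι → ℝ) :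
    (∏ i ∈ s, r i) * Real.logb 2 (∏ i ∈ s, r i)
      = ∑ i ∈ s, (∏ j ∈ s, r j) * Real.logb 2 (r i) := by
  induction s using Finset.induction with
  | empty => simp
  | insert _ _ hnot ih =>
    rename_i a s
    rw [Finset.prod_insert hnot, Finset.sum_insert hnot, mul_logb_mul]
    congr 1
    rw [mul_assoc, ih, Finset.mul_sum]
    apply Finset.sum_congr rfl
    intro i hi
    ring

lemma sum_pi_apply {ι : Type*} [Fintype ι] [DecidableEq ι] {Z : ι → Type*}
    [∀ i, Fintype (Z i)] (u : ∀ i, Z i → ℝ) (i₀ : ι) (F : Z i₀ → ℝ) :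
    ∑ φ : ∀ i, Z i, (∏ i, u i (φ i)) * F (φ i₀)
      = (∑ z, u i₀ z * F z) * ∏ i ∈ Finset.univ.erase i₀, (∑ z, u i z) := by
  classical
  set e := Equiv.piSplitAt i₀ Z with he
  have happ : ∀ (w : Z i₀ × ∀ j : { j // j ≠ i₀ }, Z j) (j : ι) (hj : j ≠ i₀),
      e.symm w j = w.2 ⟨j, hj⟩ := by
    intro w j hj
    simp [he, Equiv.piSplitAt, hj]
  have happ0 : ∀ w : Z i₀ × ∀ j : { j // j ≠ i₀ }, Z j, e.symm w i₀ = w.1 := by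
    intro w
    simp [he, Equiv.piSplitAt]
  have hsub : ∀ x : ι, x ∈ Finset.univ.erase i₀ ↔ x ≠ i₀ := by
    intro x
    simp
  have hprod : ∀ w : Z i₀ × ∀ j : { j // j ≠ i₀ }, Z j,
      (∏ i, u i (e.symm w i)) = u i₀ w.1 * ∏ j : { j // j ≠ i₀ }, u j.1 (w.2 j) := by
    intro w
    rw [← Finset.mul_prod_erase Finset.univ _ (Finset.mem_univ i₀), happ0]
    congr 1
    rw [Finset.prod_subtype (Finset.univ.erase i₀) hsub (fun j => u j (e.symm w j))]
    exact Finset.prod_congr rfl fun j _ => by rw [happ w j.1 j.2]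
  rw [← Equiv.sum_comp e.symm (fun φ => (∏ i, u i (φ i)) * F (φ i₀)),
    Fintype.sum_prod_type]
  have step : ∀ (z : Z i₀) (ψ : ∀ j : { j // j ≠ i₀ }, Z j),
      (∏ i, u i (e.symm (z, ψ) i)) * F (e.symm (z, ψ) i₀)
        = (u i₀ z * F z) * ∏ j : { j // j ≠ i₀ }, u j.1 (ψ j) := by
    intro z ψ
    rw [hprod (z, ψ), happ0 (z, ψ)]
    ring
  calc ∑ z, ∑ ψ : ∀ j : { j // j ≠ i₀ }, Z j,
        (∏ i, u i (e.symm (z, ψ) i)) * F (e.symm (z, ψ) i₀)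
      = ∑ z, ∑ ψ : ∀ j : { j // j ≠ i₀ }, Z j,
          (u i₀ z * F z) * ∏ j : { j // j ≠ i₀ }, u j.1 (ψ j) :=
        Finset.sum_congr rfl fun z _ => Finset.sum_congr rfl fun ψ _ => step z ψ
    _ = (∑ z, u i₀ z * F z)
          * ∑ ψ : ∀ j : { j // j ≠ i₀ }, Z j, ∏ j : { j // j ≠ i₀ }, u j.1 (ψ j) := by
        rw [Finset.sum_mul]
        exact Finset.sum_congr rfl fun z _ => (Finset.mul_sum _ _ _).symm
    _ = (∑ z, u i₀ z * F z) * ∏ i ∈ Finset.univ.erase i₀, (∑ z, u i z) := by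
        congr 1
        rw [← Fintype.prod_sum (fun (j : { j // j ≠ i₀ }) (z : Z j.1) => u j.1 z)]
        rw [Finset.prod_subtype (Finset.univ.erase i₀) hsub (fun j => ∑ z, u j z)]

lemma sum_pi_prod {ι : Type*} [Fintype ι] [DecidableEq ι] {Z : ι → Type*} [∀ i, Fintype (Z i)]
    (u : ∀ i, Z i → ℝ) :
    ∑ φ : ∀ i, Z i, ∏ i, u i (φ i) = ∏ i, ∑ z, u i z :=
  (Fintype.prod_sum (fun i (z : Z i) => u i z)).symm

lemma sum_pi_restrict {ι : Type*} [Fintype ι] [DecidableEq ι] {Z : ι → Type*}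
    [∀ i, Fintype (Z i)] [∀ i, DecidableEq (Z i)] (B : Finset ι) (u : ∀ i, Z i → ℝ)
    (φ : ∀ i : {i // i ∈ B}, Z i.1) :
    ∑ x : ∀ i, Z i, (if (fun i : {i // i ∈ B} => x i.1) = φ then ∏ i, u i (x i) else 0)
      = (∏ i : {i // i ∈ B}, u i.1 (φ i)) * ∏ i : {i // i ∉ B}, (∑ z, u i.1 z) := by
  classical
  set e := Equiv.piEquivPiSubtypeProd (· ∈ B) Z with he
  have key1 : ∀ w : (∀ i : {i // i ∈ B}, Z i.1) × (∀ i : {i // ¬ i ∈ B}, Z i.1),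
      (fun i : {i // i ∈ B} => e.symm w i.1) = w.1 := by
    intro w
    funext i
    simp [he, Equiv.piEquivPiSubtypeProd, i.2]
  have key2 : ∀ (w : (∀ i : {i // i ∈ B}, Z i.1) × (∀ i : {i // ¬ i ∈ B}, Z i.1))
      (i : {i // ¬ i ∈ B}), e.symm w i.1 = w.2 ⟨i.1, i.2⟩ := by
    intro w i
    simp [he, Equiv.piEquivPiSubtypeProd, i.2]
  have keyprod : ∀ w : (∀ i : {i // i ∈ B}, Z i.1) × (∀ i : {i // ¬ i ∈ B}, Z i.1),
      (∏ i, u i (e.symm w i))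
        = (∏ i : {i // i ∈ B}, u i.1 (w.1 i)) * ∏ i : {i // ¬ i ∈ B}, u i.1 (w.2 i) := by
    intro w
    rw [← Fintype.prod_subtype_mul_prod_subtype (· ∈ B) (fun i => u i (e.symm w i))]
    exact congrArg₂ (· * ·)
      (Finset.prod_congr (by congr!) fun i _ => by rw [congrFun (key1 w) i])
      (Finset.prod_congr (by congr!) fun i _ => by rw [key2 w i])
  rw [← Equiv.sum_comp e.symm
    (fun x => (if (fun i : {i // i ∈ B} => x i.1) = φ then ∏ i, u i (x i) else 0)),
    Fintype.sum_prod_type]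
  have step : ∀ a : ∀ i : {i // i ∈ B}, Z i.1,
      ∑ b : ∀ i : {i // ¬ i ∈ B}, Z i.1,
        (if (fun i : {i // i ∈ B} => e.symm (a, b) i.1) = φ
          then ∏ i, u i (e.symm (a, b) i) else 0)
      = if a = φ then (∏ i : {i // i ∈ B}, u i.1 (a i))
          * ∑ b : ∀ i : {i // ¬ i ∈ B}, Z i.1, ∏ i : {i // ¬ i ∈ B}, u i.1 (b i)
        else 0 := by
    intro a
    by_cases ha : a = φ
    · rw [if_pos ha]
      rw [Finset.mul_sum]
      apply Finset.sum_congr rfl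
      intro b _
      rw [key1 (a, b), if_pos ha, keyprod (a, b)]
    · rw [if_neg ha]
      apply Finset.sum_eq_zero
      intro b _
      rw [key1 (a, b), if_neg ha]
  rw [Finset.sum_congr rfl fun a _ => step a, Finset.sum_ite_eq' Finset.univ φ]
  rw [if_pos (Finset.mem_univ φ)]
  congr 1
  exact sum_pi_prod (fun (i : {i // ¬ i ∈ B}) (z : Z i.1) => u i.1 z)

lemma ent_cond_prod {ι : Type*} [Fintype ι] [DecidableEq ι] {Z : ι → Type*}
    [∀ i, Fintype (Z i)] {Q : Type*} [Fintype Q] (pQ : Q → ℝ) (g : ∀ i, Q → Z i → ℝ)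
    (hg : ∀ i q, (∑ z, g i q z) = 1) :
    ent (fun w : (∀ i, Z i) × Q => pQ w.2 * ∏ i, g i w.2 (w.1 i))
      = ent pQ + ∑ i, (- ∑ q, ∑ z, pQ q * (g i q z * Real.logb 2 (g i q z))) := by
  classical
  unfold ent
  rw [Fintype.sum_prod_type]
  rw [Finset.sum_comm]
  have inner : ∀ q : Q,
      ∑ φ : ∀ i, Z i, (pQ q * ∏ i, g i q (φ i))
          * Real.logb 2 (pQ q * ∏ i, g i q (φ i))
      = pQ q * Real.logb 2 (pQ q)
        + ∑ i, pQ q * (∑ z, g i q z * Real.logb 2 (g i q z)) := by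
    intro q
    have expand : ∀ φ : ∀ i, Z i,
        (pQ q * ∏ i, g i q (φ i)) * Real.logb 2 (pQ q * ∏ i, g i q (φ i))
        = (∏ i, g i q (φ i)) * (pQ q * Real.logb 2 (pQ q))
          + ∑ i, pQ q * ((∏ j, g j q (φ j)) * Real.logb 2 (g i q (φ i))) := by
      intro φ
      rw [mul_logb_mul]
      congr 1
      · ring
      · rw [mul_assoc, prod_mul_logb_prod, Finset.mul_sum]
    rw [Finset.sum_congr rfl fun φ _ => expand φ, Finset.sum_add_distrib]
    congr 1
    · rw [← Finset.sum_mul, sum_pi_prod (fun i (z : Z i) => g i q z)]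
      rw [Finset.prod_congr rfl fun i _ => hg i q, Finset.prod_const_one, one_mul]
    · rw [Finset.sum_comm]
      apply Finset.sum_congr rfl
      intro i _
      rw [← Finset.mul_sum]
      congr 1
      rw [sum_pi_apply (fun j (z : Z j) => g j q z) i
        (fun z => Real.logb 2 (g i q z))]
      rw [Finset.prod_congr rfl (fun j hj => hg j q), Finset.prod_const_one, mul_one]
  rw [Finset.sum_congr rfl fun q _ => inner q, Finset.sum_add_distrib, neg_add]
  congr 1
  rw [Finset.sum_neg_distrib]
  congr 1
  rw [Finset.sum_comm]
  apply Finset.sum_congr rfl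
  intro i _
  apply Finset.sum_congr rfl
  intro q _
  exact Finset.mul_sum _ _ _

end MacAux

section SingleLetter

variable {K : ℕ} {Q Yo : Type*} {X : Fin K → Type*}
  [Fintype Q] [DecidableEq Q] [Fintype Yo] [DecidableEq Yo]
  [∀ k, Fintype (X k)] [∀ k, DecidableEq (X k)]

variable (pQ : Q → ℝ) (pX : ∀ k, Q → X k → ℝ) (W : (∀ k, X k) → Yo → ℝ)

/-- The joint distribution of `(Q, X_{[K]}, Y1)` with
`p(q, x_{[K]}, y1) = p(q) p(x1|q) ⋯ p(xK|q) p(y1 | x_{[K]})`. -/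
def SjointP : Q × (∀ k, X k) × Yo → ℝ := fun z =>
  pQ z.1 * (∏ k, pX k z.1 (z.2.1 k)) * W z.2.1 z.2.2

/-- A set `S ⊆ [K]` is *decodable* if `R_T ≤ I(X_T; Y1 | X_{S \ T}, Q)` for all `T ⊆ S`. -/
def IsDecodableSet (R : Fin K → ℝ) (S : Finset (Fin K)) : Prop :=
  ∀ T ⊆ S, ∑ k ∈ T, R k ≤
    condMutInfo (SjointP pQ pX W)
      (fun z => fun k : {k // k ∈ T} => z.2.1 k.1)
      (fun z => z.2.2)
      (fun z => ((fun k : {k // k ∈ S \ T} => z.2.1 k.1), z.1))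

namespace MacAux

lemma SjointP_nonneg (hpQ : IsPMF pQ) (hpX : ∀ k q, IsPMF (pX k q))
    (hW : ∀ x, IsPMF (W x)) : ∀ z, 0 ≤ SjointP pQ pX W z := by
  intro z
  exact mul_nonneg (mul_nonneg (hpQ.1 _)
    (Finset.prod_nonneg fun k _ => (hpX k _).1 _)) ((hW _).1 _)

lemma SjointP_sum (hpQ : IsPMF pQ) (hpX : ∀ k q, IsPMF (pX k q))
    (hW : ∀ x, IsPMF (W x)) : ∑ z, SjointP pQ pX W z = 1 := by
  unfold SjointP
  rw [Fintype.sum_prod_type]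
  have inner : ∀ q : Q, ∑ v : (∀ k, X k) × Yo,
      pQ q * (∏ k, pX k q (v.1 k)) * W v.1 v.2 = pQ q := by
    intro q
    rw [Fintype.sum_prod_type]
    have hy : ∀ x : ∀ k, X k, ∑ y, pQ q * (∏ k, pX k q (x k)) * W x y
        = pQ q * ∏ k, pX k q (x k) := by
      intro x
      rw [← Finset.mul_sum, (hW x).2, mul_one]
    rw [Finset.sum_congr rfl fun x _ => hy x, ← Finset.mul_sum,
      sum_pi_prod (fun k (z : X k) => pX k q z),
      Finset.prod_congr rfl fun k _ => (hpX k q).2, Finset.prod_const_one, mul_one]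
  rw [Finset.sum_congr rfl fun q _ => inner q, hpQ.2]

lemma distOf_res (hpX : ∀ k q, IsPMF (pX k q)) (hW : ∀ x, IsPMF (W x))
    (B : Finset (Fin K)) (w : (∀ k : {k // k ∈ B}, X k.1) × Q) :
    distOf (SjointP pQ pX W) (fun z => ((fun k : {k // k ∈ B} => z.2.1 k.1), z.1)) w
      = pQ w.2 * ∏ k : {k // k ∈ B}, pX k.1 w.2 (w.1 k) := by
  classical
  obtain ⟨φ, q₀⟩ := w
  unfold distOf SjointP
  rw [Fintype.sum_prod_type]
  have step1 : ∀ (q : Q) (v : (∀ k, X k) × Yo),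
      (if ((fun k : {k // k ∈ B} => v.1 k.1), q) = (φ, q₀)
        then pQ q * (∏ k, pX k q (v.1 k)) * W v.1 v.2 else 0)
      = if q = q₀ then (if (fun k : {k // k ∈ B} => v.1 k.1) = φ
          then pQ q * (∏ k, pX k q (v.1 k)) * W v.1 v.2 else 0) else 0 := by
    intro q v
    by_cases h1 : q = q₀ <;> by_cases h2 : (fun k : {k // k ∈ B} => v.1 k.1) = φ <;>
      simp [Prod.ext_iff, h1, h2]
  rw [Finset.sum_congr rfl fun q _ => Finset.sum_congr rfl fun v _ => step1 q v]
  have step2 : ∀ q : Q,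
      (∑ v : (∀ k, X k) × Yo, if q = q₀ then (if (fun k : {k // k ∈ B} => v.1 k.1) = φ
          then pQ q * (∏ k, pX k q (v.1 k)) * W v.1 v.2 else 0) else 0)
      = if q = q₀ then (∑ v : (∀ k, X k) × Yo,
          if (fun k : {k // k ∈ B} => v.1 k.1) = φ
          then pQ q * (∏ k, pX k q (v.1 k)) * W v.1 v.2 else 0) else 0 := by
    intro q
    by_cases h1 : q = q₀ <;> simp [h1]
  rw [Finset.sum_congr rfl fun q _ => step2 q, Finset.sum_ite_eq' Finset.univ q₀,
    if_pos (Finset.mem_univ q₀)]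
  rw [Fintype.sum_prod_type]
  have step3 : ∀ x : ∀ k, X k,
      (∑ y : Yo, if (fun k : {k // k ∈ B} => x k.1) = φ
        then pQ q₀ * (∏ k, pX k q₀ (x k)) * W x y else 0)
      = pQ q₀ * (if (fun k : {k // k ∈ B} => x k.1) = φ
          then (∏ k, pX k q₀ (x k)) else 0) := by
    intro x
    by_cases h2 : (fun k : {k // k ∈ B} => x k.1) = φ
    · simp only [h2, eq_self_iff_true, if_true]
      rw [← Finset.mul_sum, (hW x).2, mul_one]
    · simp [h2]
  rw [Finset.sum_congr rfl fun x _ => step3 x, ← Finset.mul_sum,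
    sum_pi_restrict B (fun k => pX k q₀) φ,
    Finset.prod_congr (rfl : (Finset.univ : Finset {k // k ∉ B}) = _)
      (fun k _ => (hpX k.1 q₀).2),
    Finset.prod_const_one, mul_one]

/-- entropy of `(X_B, Q)` -/
def hXc (B : Finset (Fin K)) : ℝ :=
  entOf (SjointP pQ pX W) (fun z => ((fun k : {k // k ∈ B} => z.2.1 k.1), z.1))

/-- entropy of `(X_B, Q, Y)` -/
def hXY (B : Finset (Fin K)) : ℝ :=
  entOf (SjointP pQ pX W) (fun z => ((fun k : {k // k ∈ B} => z.2.1 k.1), z.1, z.2.2))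

/-- single letter conditional entropy summand -/
def sX (k : Fin K) : ℝ :=
  -∑ q, ∑ x : X k, pQ q * (pX k q x * Real.logb 2 (pX k q x))

lemma hXc_eq (hpQ : IsPMF pQ) (hpX : ∀ k q, IsPMF (pX k q)) (hW : ∀ x, IsPMF (W x))
    (B : Finset (Fin K)) :
    hXc pQ pX W B = ent pQ + ∑ k ∈ B, sX pQ pX k := by
  show entOf (SjointP pQ pX W) (fun z => ((fun k : {k // k ∈ B} => z.2.1 k.1), z.1))
      = ent pQ + ∑ k ∈ B, sX pQ pX k
  classical
  unfold entOf
  rw [show distOf (SjointP pQ pX W) (fun z => ((fun k : {k // k ∈ B} => z.2.1 k.1), z.1))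
      = fun w : (∀ k : {k // k ∈ B}, X k.1) × Q =>
          pQ w.2 * ∏ k : {k // k ∈ B}, pX k.1 w.2 (w.1 k)
    from funext fun w => distOf_res pQ pX W hpX hW B w]
  rw [ent_cond_prod pQ (fun (k : {k // k ∈ B}) q z => pX k.1 q z)
    (fun k q => (hpX k.1 q).2)]
  congr 1
  exact (Finset.sum_subtype B (fun k => Iff.rfl) (sX pQ pX)).symm

lemma condMutInfo_eq (T A : Finset (Fin K)) :
    condMutInfo (SjointP pQ pX W)
      (fun z => fun k : {k // k ∈ T} => z.2.1 k.1)
      (fun z => z.2.2)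
      (fun z => ((fun k : {k // k ∈ A} => z.2.1 k.1), z.1))
    = (hXY pQ pX W A - hXc pQ pX W A) - (hXY pQ pX W (T ∪ A) - hXc pQ pX W (T ∪ A)) := by
  classical
  set p := SjointP pQ pX W with hp
  -- first term: H(X_T, (X_A, Q)) = H(X_{T∪A}, Q)
  have E1 : entOf p (fun z => ((fun k : {k // k ∈ T} => z.2.1 k.1),
        ((fun k : {k // k ∈ A} => z.2.1 k.1), z.1))) = hXc pQ pX W (T ∪ A) := by
    refine entOf_comp_inj p
      (fun z => ((fun k : {k // k ∈ T ∪ A} => z.2.1 k.1), z.1))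
      (fun w => ((fun k : {k // k ∈ T} => w.1 ⟨k.1, Finset.mem_union_left A k.2⟩),
        ((fun k : {k // k ∈ A} => w.1 ⟨k.1, Finset.mem_union_right T k.2⟩), w.2))) ?_
    intro w w' h
    simp only [Prod.mk.injEq] at h
    obtain ⟨h1, h2, h3⟩ := h
    refine Prod.ext ?_ h3
    funext k
    rcases Finset.mem_union.1 k.2 with hk | hk
    · exact congrFun h1 ⟨k.1, hk⟩
    · exact congrFun h2 ⟨k.1, hk⟩
  -- second term: H(Y, (X_A, Q)) = H(X_A, Q, Y)
  have E2 : entOf p (fun z => (z.2.2, ((fun k : {k // k ∈ A} => z.2.1 k.1), z.1)))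
      = hXY pQ pX W A := by
    refine entOf_comp_inj p
      (fun z => ((fun k : {k // k ∈ A} => z.2.1 k.1), z.1, z.2.2))
      (fun w => (w.2.2, (w.1, w.2.1))) ?_
    intro w w' h
    simp only [Prod.mk.injEq] at h
    exact Prod.ext h.2.1 (Prod.ext h.2.2 h.1)
  -- third term: H(X_T, Y, (X_A, Q)) = H(X_{T∪A}, Q, Y)
  have E3 : entOf p (fun z => ((fun k : {k // k ∈ T} => z.2.1 k.1), z.2.2,
        ((fun k : {k // k ∈ A} => z.2.1 k.1), z.1))) = hXY pQ pX W (T ∪ A) := by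
    refine entOf_comp_inj p
      (fun z => ((fun k : {k // k ∈ T ∪ A} => z.2.1 k.1), z.1, z.2.2))
      (fun w => ((fun k : {k // k ∈ T} => w.1 ⟨k.1, Finset.mem_union_left A k.2⟩),
        w.2.2, ((fun k : {k // k ∈ A} => w.1 ⟨k.1, Finset.mem_union_right T k.2⟩),
          w.2.1))) ?_
    intro w w' h
    simp only [Prod.mk.injEq] at h
    obtain ⟨h1, h2, h3, h4⟩ := h
    refine Prod.ext ?_ (Prod.ext h4 h2)
    funext k
    rcases Finset.mem_union.1 k.2 with hk | hk
    · exact congrFun h1 ⟨k.1, hk⟩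
    · exact congrFun h3 ⟨k.1, hk⟩
  show entOf p _ + entOf p _ - entOf p _ - entOf p _ = _
  rw [E1, E2, E3]
  have E4 : entOf p (fun z => ((fun k : {k // k ∈ A} => z.2.1 k.1), z.1))
      = hXc pQ pX W A := rfl
  rw [E4]
  ring

lemma hXY_submod (hpQ : IsPMF pQ) (hpX : ∀ k q, IsPMF (pX k q)) (hW : ∀ x, IsPMF (W x))
    (T A C : Finset (Fin K)) :
    hXY pQ pX W (C ∪ (T ∪ A)) + hXY pQ pX W A
      ≤ hXY pQ pX W (C ∪ A) + hXY pQ pX W (T ∪ A) := by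
  classical
  set p := SjointP pQ pX W with hp
  have hpmf : IsPMF p :=
    ⟨SjointP_nonneg pQ pX W hpQ hpX hW, SjointP_sum pQ pX W hpQ hpX hW⟩
  have core := entOf_submod p hpmf
    (fun z => fun k : {k // k ∈ C} => z.2.1 k.1)
    (fun z => fun k : {k // k ∈ T} => z.2.1 k.1)
    (fun z => ((fun k : {k // k ∈ A} => z.2.1 k.1), z.1, z.2.2))
  have E1 : entOf p (fun z => ((fun k : {k // k ∈ C} => z.2.1 k.1),
        (fun k : {k // k ∈ T} => z.2.1 k.1),
        ((fun k : {k // k ∈ A} => z.2.1 k.1), z.1, z.2.2)))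
      = hXY pQ pX W (C ∪ (T ∪ A)) := by
    refine entOf_comp_inj p
      (fun z => ((fun k : {k // k ∈ C ∪ (T ∪ A)} => z.2.1 k.1), z.1, z.2.2))
      (fun w => ((fun k : {k // k ∈ C} => w.1 ⟨k.1, Finset.mem_union_left _ k.2⟩),
        (fun k : {k // k ∈ T} => w.1 ⟨k.1,
          Finset.mem_union_right _ (Finset.mem_union_left _ k.2)⟩),
        ((fun k : {k // k ∈ A} => w.1 ⟨k.1,
          Finset.mem_union_right _ (Finset.mem_union_right _ k.2)⟩), w.2.1, w.2.2))) ?_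
    intro w w' h
    simp only [Prod.mk.injEq] at h
    obtain ⟨h1, h2, h3, h4, h5⟩ := h
    refine Prod.ext ?_ (Prod.ext h4 h5)
    funext k
    rcases Finset.mem_union.1 k.2 with hk | hk
    · exact congrFun h1 ⟨k.1, hk⟩
    · rcases Finset.mem_union.1 hk with hk' | hk'
      · exact congrFun h2 ⟨k.1, hk'⟩
      · exact congrFun h3 ⟨k.1, hk'⟩
  have E2 : entOf p (fun z => ((fun k : {k // k ∈ C} => z.2.1 k.1),
        ((fun k : {k // k ∈ A} => z.2.1 k.1), z.1, z.2.2)))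
      = hXY pQ pX W (C ∪ A) := by
    refine entOf_comp_inj p
      (fun z => ((fun k : {k // k ∈ C ∪ A} => z.2.1 k.1), z.1, z.2.2))
      (fun w => ((fun k : {k // k ∈ C} => w.1 ⟨k.1, Finset.mem_union_left _ k.2⟩),
        ((fun k : {k // k ∈ A} => w.1 ⟨k.1, Finset.mem_union_right _ k.2⟩),
          w.2.1, w.2.2))) ?_
    intro w w' h
    simp only [Prod.mk.injEq] at h
    obtain ⟨h1, h2, h3, h4⟩ := h
    refine Prod.ext ?_ (Prod.ext h3 h4)
    funext k
    rcases Finset.mem_union.1 k.2 with hk | hk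
    · exact congrFun h1 ⟨k.1, hk⟩
    · exact congrFun h2 ⟨k.1, hk⟩
  have E3 : entOf p (fun z => ((fun k : {k // k ∈ T} => z.2.1 k.1),
        ((fun k : {k // k ∈ A} => z.2.1 k.1), z.1, z.2.2)))
      = hXY pQ pX W (T ∪ A) := by
    refine entOf_comp_inj p
      (fun z => ((fun k : {k // k ∈ T ∪ A} => z.2.1 k.1), z.1, z.2.2))
      (fun w => ((fun k : {k // k ∈ T} => w.1 ⟨k.1, Finset.mem_union_left _ k.2⟩),
        ((fun k : {k // k ∈ A} => w.1 ⟨k.1, Finset.mem_union_right _ k.2⟩),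
          w.2.1, w.2.2))) ?_
    intro w w' h
    simp only [Prod.mk.injEq] at h
    obtain ⟨h1, h2, h3, h4⟩ := h
    refine Prod.ext ?_ (Prod.ext h3 h4)
    funext k
    rcases Finset.mem_union.1 k.2 with hk | hk
    · exact congrFun h1 ⟨k.1, hk⟩
    · exact congrFun h2 ⟨k.1, hk⟩
  rw [E1, E2, E3] at core
  exact core

lemma cond_mono (hpQ : IsPMF pQ) (hpX : ∀ k q, IsPMF (pX k q)) (hW : ∀ x, IsPMF (W x))
    (T A C : Finset (Fin K)) (hTA : Disjoint T A) (hTC : Disjoint T C) :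
    (hXY pQ pX W A - hXc pQ pX W A)
        - (hXY pQ pX W (T ∪ A) - hXc pQ pX W (T ∪ A))
      ≤ (hXY pQ pX W (A ∪ C) - hXc pQ pX W (A ∪ C))
        - (hXY pQ pX W (T ∪ (A ∪ C)) - hXc pQ pX W (T ∪ (A ∪ C))) := by
  classical
  have u1 : C ∪ (T ∪ A) = T ∪ (A ∪ C) := by
    ext x
    simp only [Finset.mem_union]
    tauto
  have u2 : C ∪ A = A ∪ C := Finset.union_comm C A
  have sub := hXY_submod pQ pX W hpQ hpX hW T A C
  rw [u1, u2] at sub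
  have c1 : hXc pQ pX W (T ∪ A) - hXc pQ pX W A = ∑ k ∈ T, sX pQ pX k := by
    rw [hXc_eq pQ pX W hpQ hpX hW, hXc_eq pQ pX W hpQ hpX hW,
      Finset.sum_union hTA]
    ring
  have c2 : hXc pQ pX W (T ∪ (A ∪ C)) - hXc pQ pX W (A ∪ C)
      = ∑ k ∈ T, sX pQ pX k := by
    rw [hXc_eq pQ pX W hpQ hpX hW, hXc_eq pQ pX W hpQ hpX hW,
      Finset.sum_union (Finset.disjoint_union_right.2 ⟨hTA, hTC⟩)]
    ring
  linarith

end MacAux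

open MacAux

/-- **Equivalence of the MAC form and the min form (Appendix B).** For a rate tuple `R` and
a nonempty demand set `D1 ⊆ [K]`, the following are equivalent:
(i) there is `S ⊇ D1` such that `R_T ≤ I(X_T; Y1 | X_{S \ T}, Q)` for all `T ⊆ S`;
(ii) for every `V` with `V ∩ D1 ≠ ∅` there is `V' ⊆ V` with `V' ∩ D1 = V ∩ D1` and
`R_{V'} ≤ I(X_{V'}; Y1 | X_{[K] \ V}, Q)`. -/
theorem mac_form_iff_min_form
    (hpQ : IsPMF pQ) (hpX : ∀ k q, IsPMF (pX k q)) (hW : ∀ x, IsPMF (W x))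
    (R : Fin K → ℝ) (hR : ∀ k, 0 ≤ R k) (D1 : Finset (Fin K)) (hD1 : D1.Nonempty) :
    (∃ S : Finset (Fin K), D1 ⊆ S ∧
        ∀ T ⊆ S, ∑ k ∈ T, R k ≤
          condMutInfo (SjointP pQ pX W)
            (fun z => fun k : {k // k ∈ T} => z.2.1 k.1)
            (fun z => z.2.2)
            (fun z => ((fun k : {k // k ∈ S \ T} => z.2.1 k.1), z.1))) ↔
      (∀ V : Finset (Fin K), (V ∩ D1).Nonempty →
        ∃ V' ⊆ V, V' ∩ D1 = V ∩ D1 ∧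
          ∑ k ∈ V', R k ≤
            condMutInfo (SjointP pQ pX W)
              (fun z => fun k : {k // k ∈ V'} => z.2.1 k.1)
              (fun z => z.2.2)
              (fun z => ((fun k : {k // k ∈ Vᶜ} => z.2.1 k.1), z.1))) := by  open MacAux in

  classical
  constructor
  · -- MAC form implies min form
    rintro ⟨S, hDS, hdec⟩ V hV
    refine ⟨V ∩ S, Finset.inter_subset_left, ?_, ?_⟩
    · ext x
      simp only [Finset.mem_inter]
      constructor
      · rintro ⟨⟨h1, _⟩, h2⟩
        exact ⟨h1, h2⟩
      · rintro ⟨h1, h2⟩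
        exact ⟨⟨h1, hDS h2⟩, h2⟩
    · have hbound := hdec (V ∩ S) Finset.inter_subset_right
      rw [condMutInfo_eq pQ pX W (V ∩ S) (S \ (V ∩ S))] at hbound
      rw [condMutInfo_eq pQ pX W (V ∩ S) Vᶜ]
      have hsv : S \ (V ∩ S) = S \ V := by
        ext x
        simp only [Finset.mem_sdiff, Finset.mem_inter]
        tauto
      rw [hsv] at hbound
      have huni : (V ∩ S) ∪ (S \ V) = S := by
        ext x
        simp only [Finset.mem_union, Finset.mem_sdiff, Finset.mem_inter]
        tauto
      rw [huni] at hbound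
      have hTA : Disjoint (V ∩ S) (S \ V) := by
        rw [Finset.disjoint_left]
        intro x hx hx'
        exact (Finset.mem_sdiff.1 hx').2 (Finset.mem_inter.1 hx).1
      have hTC : Disjoint (V ∩ S) (Vᶜ \ S) := by
        rw [Finset.disjoint_left]
        intro x hx hx'
        exact Finset.mem_compl.1 (Finset.mem_sdiff.1 hx').1 (Finset.mem_inter.1 hx).1
      have mono := cond_mono pQ pX W hpQ hpX hW (V ∩ S) (S \ V) (Vᶜ \ S) hTA hTC
      have hac : (S \ V) ∪ (Vᶜ \ S) = Vᶜ := by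
        ext x
        simp only [Finset.mem_union, Finset.mem_sdiff, Finset.mem_compl]
        tauto
      rw [hac, huni] at mono
      linarith
  · -- min form implies MAC form
    intro hmin
    set G : Finset (Fin K) → ℝ :=
      fun B => -(hXY pQ pX W B - hXc pQ pX W B) - ∑ k ∈ B, R k with hG
    set F : Finset (Finset (Fin K)) :=
      Finset.univ.powerset.filter (fun S => D1 ⊆ S) with hF
    have hmemF : ∀ B : Finset (Fin K), B ∈ F ↔ D1 ⊆ B := by
      intro B
      simp [hF]
    have hFne : F.Nonempty := ⟨Finset.univ, (hmemF _).2 (Finset.subset_univ D1)⟩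
    obtain ⟨S, hSmem, hSmax⟩ := Finset.exists_max_image F G hFne
    have hDS : D1 ⊆ S := (hmemF S).1 hSmem
    refine ⟨S, hDS, ?_⟩
    intro T hTS
    rw [condMutInfo_eq pQ pX W T (S \ T), Finset.union_sdiff_of_subset hTS]
    have hsum2 : ∑ k ∈ S \ T, R k + ∑ k ∈ T, R k = ∑ k ∈ S, R k :=
      Finset.sum_sdiff hTS
    by_cases hTD : (T ∩ D1).Nonempty
    · -- T meets the demand set: use the min-form hypothesis
      have hVD : ((T ∪ Sᶜ) ∩ D1).Nonempty := by
        obtain ⟨x, hx⟩ := hTD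
        rw [Finset.mem_inter] at hx
        exact ⟨x, Finset.mem_inter.2 ⟨Finset.mem_union_left _ hx.1, hx.2⟩⟩
      obtain ⟨V', hV'V, hV'D, hV'b⟩ := hmin (T ∪ Sᶜ) hVD
      rw [condMutInfo_eq pQ pX W V' (T ∪ Sᶜ)ᶜ] at hV'b
      have hVc : (T ∪ Sᶜ)ᶜ = S \ T := by
        ext x
        simp only [Finset.mem_compl, Finset.mem_union, Finset.mem_sdiff]
        tauto
      rw [hVc] at hV'b
      have hmem'' : V' ∪ (S \ T) ∈ F := by
        rw [hmemF]
        intro x hx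
        by_cases hxT : x ∈ T
        · have hxV : x ∈ (T ∪ Sᶜ) ∩ D1 :=
            Finset.mem_inter.2 ⟨Finset.mem_union_left _ hxT, hx⟩
          rw [← hV'D] at hxV
          exact Finset.mem_union_left _ (Finset.mem_inter.1 hxV).1
        · exact Finset.mem_union_right _ (Finset.mem_sdiff.2 ⟨hDS hx, hxT⟩)
      have hmax'' := hSmax _ hmem''
      have hdisj : Disjoint V' (S \ T) := by
        rw [Finset.disjoint_left]
        intro x hx hx'
        rcases Finset.mem_union.1 (hV'V hx) with h | h
        · exact (Finset.mem_sdiff.1 hx').2 h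
        · exact Finset.mem_compl.1 h (Finset.mem_sdiff.1 hx').1
      have hsum1 : ∑ k ∈ V' ∪ (S \ T), R k = ∑ k ∈ V', R k + ∑ k ∈ S \ T, R k :=
        Finset.sum_union hdisj
      simp only [hG] at hmax''
      rw [hsum1] at hmax''
      linarith
    · -- T misses the demand set: use maximality with S \ T
      rw [Finset.not_nonempty_iff_eq_empty] at hTD
      have hmem' : S \ T ∈ F := by
        rw [hmemF]
        intro x hx
        refine Finset.mem_sdiff.2 ⟨hDS hx, fun hxT => ?_⟩
        have : x ∈ T ∩ D1 := Finset.mem_inter.2 ⟨hxT, hx⟩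
        rw [hTD] at this
        exact absurd this (Finset.notMem_empty x)
      have hmax' := hSmax _ hmem'
      simp only [hG] at hmax'
      linarith

end SingleLetter
end
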